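/- Let H be a complex Hilbert space and φ : B(H) → B(H) a bijection preserving the Douglas solution in both directions. Then for every B, range B = H if and only if range φ(B) = H. -/

import Mathlib

/-- For a surjective `T`, every `A` has a Douglas solution `X` with
`A = T ∘ X` and `range X ≤ (ker T)ᗮ`. -/
lemma exists_douglas_solution
    {H : Type*} [NormedAddCommGroup H] [InnerProductSpace ℂ H] [CompleteSpace H]
    (T A : H →L[ℂ] H) (hT : LinearMap.range (T : H →ₗ[ℂ] H) = ⊤) :
    ∃ X : H →L[ℂ] H, A = T ∘L X ∧ LinearMap.range (X : H →ₗ[ℂ] H) ≤ (LinearMap.ker (T : H →ₗ[ℂ] H))ᗮ := by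
  have hclosed : IsClosed (LinearMap.ker (T : H →ₗ[ℂ] H) : Set H) := ContinuousLinearMap.isClosed_ker T
  haveI : CompleteSpace (LinearMap.ker (T : H →ₗ[ℂ] H)) := hclosed.completeSpace_coe
  set K := (LinearMap.ker (T : H →ₗ[ℂ] H))ᗮ with hK
  let T' : K →L[ℂ] H := T.comp K.subtypeL
  have hinj : LinearMap.ker (T' : K →ₗ[ℂ] H) = ⊥ := by
    rw [Submodule.eq_bot_iff]
    rintro ⟨x, hxK⟩ hx
    have hxker : x ∈ LinearMap.ker (T : H →ₗ[ℂ] H) := by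
      simpa [T', LinearMap.mem_ker] using hx
    have : x = 0 := by
      have := (LinearMap.ker (T : H →ₗ[ℂ] H)).inf_orthogonal_eq_bot
      have hmem : x ∈ LinearMap.ker (T : H →ₗ[ℂ] H) ⊓ (LinearMap.ker (T : H →ₗ[ℂ] H))ᗮ := ⟨hxker, hxK⟩
      rw [this] at hmem
      simpa using hmem
    simpa [Subtype.ext_iff] using this
  have hsurj : LinearMap.range (T' : K →ₗ[ℂ] H) = ⊤ := by
    rw [LinearMap.range_eq_top]
    intro y
    obtain ⟨x, hx⟩ := LinearMap.range_eq_top.mp hT y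
    obtain ⟨p, hp, q, hq, hpq⟩ :=
      (LinearMap.ker (T : H →ₗ[ℂ] H)).exists_add_mem_mem_orthogonal x
    refine ⟨⟨q, hq⟩, ?_⟩
    have : T q = y := by
      have : T x = T p + T q := by rw [hpq]; simp
      rw [show T x = y from hx] at this
      simpa [show T p = 0 from LinearMap.mem_ker.mp hp] using this.symm
    simpa [T'] using this
  let e := ContinuousLinearEquiv.ofBijective T' hinj hsurj
  refine ⟨K.subtypeL ∘L (e.symm : H →L[ℂ] K) ∘L A, ?_, ?_⟩
  · ext v
    have : T' (e.symm (A v)) = A v := e.apply_symm_apply (A v)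
    simpa [T'] using this.symm
  · rintro y ⟨v, rfl⟩
    exact (e.symm (A v)).2

theorem douglas_preserver_preserves_surjectivity
    {H : Type*} [NormedAddCommGroup H] [InnerProductSpace ℂ H] [CompleteSpace H]
    (φ : (H →L[ℂ] H) → (H →L[ℂ] H))
    (hbij : Function.Bijective φ)
    (hφ : ∀ A B X : H →L[ℂ] H,
      (A = B ∘L X ∧ LinearMap.range (X : H →ₗ[ℂ] H) ≤ (LinearMap.ker (B : H →ₗ[ℂ] H))ᗮ) ↔
        (φ A = φ B ∘L φ X ∧ LinearMap.range (φ X : H →ₗ[ℂ] H) ≤ (LinearMap.ker (φ B : H →ₗ[ℂ] H))ᗮ)) :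
    ∀ B : H →L[ℂ] H, LinearMap.range (B : H →ₗ[ℂ] H) = ⊤ ↔ LinearMap.range (φ B : H →ₗ[ℂ] H) = ⊤ := by
  intro B
  constructor
  · intro hB
    obtain ⟨A, hA⟩ := hbij.2 (1 : H →L[ℂ] H)
    obtain ⟨X, hX1, hX2⟩ := exists_douglas_solution B A hB
    obtain ⟨h1, -⟩ := (hφ A B X).mp ⟨hX1, hX2⟩
    rw [hA] at h1
    rw [LinearMap.range_eq_top]
    intro y
    exact ⟨φ X y, by
      have := congrArg (fun f : H →L[ℂ] H => f y) h1
      simpa using this.symm⟩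
  · intro hB
    obtain ⟨Y, hY1, hY2⟩ := exists_douglas_solution (φ B) (φ 1) hB
    obtain ⟨X, rfl⟩ := hbij.2 Y
    obtain ⟨h1, -⟩ := (hφ 1 B X).mpr ⟨hY1, hY2⟩
    rw [LinearMap.range_eq_top]
    intro y
    exact ⟨X y, by
      have := congrArg (fun f : H →L[ℂ] H => f y) h1
      simpa using this.symm⟩
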